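/- Let H = (V*, E*) be a finite directed multigraph with arc lengths λ : E* → ℕ, arc costs c : E* → ℕ ∪ {∞}, and arc parities p : E* → {−1, 0, 1}; let B ∈ ℕ and L ∈ ℕ. Define the layered graph G' with vertex set { v_{b,q} : v ∈ V*, 0 ≤ b ≤ B, −L ≤ q ≤ L } and the following arcs: (a) budget arcs (v_{b,q}, v_{b−1,q}) of length 0 for all b ≥ 1; (b) for each arc e = (u, v) ∈ E*, 'keep' arcs (u_{b,q}, v_{b, q + p(e)}) of length λ(e) whenever q + p(e) ∈ [−L, L]; (c) for each arc e = (u, v) ∈ E* with c(e) ≤ b, 'remove' arcs (u_{b,q}, v_{b − c(e), q + p(e)}) of length 0 whenever q + p(e) ∈ [−L, L]. For a path W' in G' from u_{b₁,q₁} to v_{b₂,q₂}, let η(W') be the walk in H obtained by projecting the keep and remove arcs to their underlying arcs of E* (budget arcs are dropped), and let R(W') be the set of arcs of E* underlying the remove arcs of W'. Then η(W') is a walk in H from u to v with total parity p(η(W')) = q₂ − q₁, the total cost of R(W') is at most b₁ − b₂, and the reduced length satisfies λ_{b₁−b₂}(η(W')) ≤ λ'(W'), where λ'(W') is the total length of W'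 in G'. -/

import Mathlib

open scoped Classical

/-- The arcs of the layered graph `G'` over the directed multigraph with arcs `E` and
vertices `V`: budget arcs (indexed by a vertex together with a budget level and a parity
level), 'keep' arcs and 'remove' arcs (each indexed by an arc of `E` together with a
budget level and a parity level). -/
abbrev LArc (V E : Type*) := (V × ℕ × ℤ) ⊕ ((E × ℕ × ℤ) ⊕ (E × ℕ × ℤ))

/-- Tail of an arc of the layered graph, as an element of `V × ℕ × ℤ`. -/
def lsrc {V E : Type*} (esrc : E → V) : LArc V E → V × ℕ × ℤ
  | Sum.inl (v, b, q) => (v, b, q)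
  | Sum.inr (Sum.inl (e, b, q)) => (esrc e, b, q)
  | Sum.inr (Sum.inr (e, b, q)) => (esrc e, b, q)

/-- Head of an arc of the layered graph: budget arcs go down one budget level; keep arcs
change the parity level by `p e`; remove arcs moreover decrease the budget by `c e`. -/
def ldst {V E : Type*} (edst : E → V) (p : E → ℤ) (c : E → ℕ∞) : LArc V E → V × ℕ × ℤ
  | Sum.inl (v, b, q) => (v, b - 1, q)
  | Sum.inr (Sum.inl (e, b, q)) => (edst e, b, q + p e)
  | Sum.inr (Sum.inr (e, b, q)) => (edst e, b - (c e).toNat, q + p e)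

/-- Validity of an arc of the layered graph: budget levels lie in `[0, B]` (with `b ≥ 1`
for budget arcs and `c e ≤ b` for remove arcs) and parity levels lie in `[-L, L]`. -/
def LValid {V E : Type*} (p : E → ℤ) (c : E → ℕ∞) (B L : ℕ) : LArc V E → Prop
  | Sum.inl (_, b, q) => 1 ≤ b ∧ b ≤ B ∧ -(L : ℤ) ≤ q ∧ q ≤ (L : ℤ)
  | Sum.inr (Sum.inl (e, b, q)) => b ≤ B ∧ -(L : ℤ) ≤ q ∧ q ≤ (L : ℤ) ∧
      -(L : ℤ) ≤ q + p e ∧ q + p e ≤ (L : ℤ)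
  | Sum.inr (Sum.inr (e, b, q)) => c e ≤ (b : ℕ∞) ∧ b ≤ B ∧ -(L : ℤ) ≤ q ∧ q ≤ (L : ℤ) ∧
      -(L : ℤ) ≤ q + p e ∧ q + p e ≤ (L : ℤ)

/-- The length of an arc of the layered graph: keep arcs have length `λ e`, budget and
remove arcs have length `0`. -/
def llen {V E : Type*} (lam : E → ℕ) : LArc V E → ℕ
  | Sum.inl _ => 0
  | Sum.inr (Sum.inl (e, _, _)) => lam e
  | Sum.inr (Sum.inr _) => 0

/-- The projection `η` on arcs: budget arcs are dropped, keep and remove arcs project to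
their underlying arc of `E`. -/
def lproj {V E : Type*} : LArc V E → Option E
  | Sum.inl _ => none
  | Sum.inr (Sum.inl (e, _, _)) => some e
  | Sum.inr (Sum.inr (e, _, _)) => some e

/-- The underlying arc of a remove arc (`none` for budget and keep arcs). -/
def lremove {V E : Type*} : LArc V E → Option E
  | Sum.inr (Sum.inr (e, _, _)) => some e
  | _ => none

/-- A path in the layered graph `G'` from `x` to `y`: a chained list of valid arcs with
the prescribed endpoints, visiting no vertex twice. -/
def IsLPath {V E : Type*} (esrc edst : E → V) (p : E → ℤ) (c : E → ℕ∞) (B L : ℕ)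
    (x y : V × ℕ × ℤ) (W : List (LArc V E)) : Prop :=
  (∀ a ∈ W, LValid p c B L a) ∧
  W.Chain' (fun a b => ldst edst p c a = lsrc esrc b) ∧
  (W = [] → x = y) ∧
  (∀ a ∈ W.head?, lsrc esrc a = x) ∧
  (∀ a ∈ W.getLast?, ldst edst p c a = y) ∧
  (x :: W.map (ldst edst p c)).Nodup

/-- A walk from `x` to `y` in the directed multigraph with arcs `E`, encoded as a list
of arcs. -/
def IsWalkList {V E : Type*} (esrc edst : E → V) (x y : V) (Lw : List E) : Prop :=
  Lw.Chain' (fun a b => edst a = esrc b) ∧ (Lw = [] → x = y) ∧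
  (∀ a ∈ Lw.head?, esrc a = x) ∧ (∀ a ∈ Lw.getLast?, edst a = y)

/-- The reduced length `λ_b(Lw)` of a walk, given as a list of arcs, with respect to the
budget `b`. -/
noncomputable def redLenList {E : Type*} (lam : E → ℕ) (c : E → ℕ∞) (b : ℕ)
    (Lw : List E) : ℕ :=
  sInf {x : ℕ | ∃ I : Finset (Fin Lw.length),
    (∑ j ∈ I, c (Lw.get j)) ≤ (b : ℕ∞) ∧ x = ∑ j ∈ Iᶜ, lam (Lw.get j)}

/-- Projecting a path of the layered graph `G'` from `u_{b₁,q₁}` to `v_{b₂,q₂}` yields a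
walk `η(W')` from `u` to `v` in `H` of total parity `q₂ − q₁`; the removed arcs `R(W')`
have total cost at most `b₁ − b₂`, and `λ_{b₁−b₂}(η(W')) ≤ λ'(W')`. -/
def lpair {V E : Type*} : LArc V E → Option (E × Bool)
  | Sum.inl _ => none
  | Sum.inr (Sum.inl (e, _, _)) => some (e, false)
  | Sum.inr (Sum.inr (e, _, _)) => some (e, true)

lemma proj_eq_pair {V E : Type*} (W : List (LArc V E)) :
    W.filterMap lproj = (W.filterMap lpair).map Prod.fst := by
  induction W with
  | nil => simp
  | cons a t ih => rcases a with ⟨v,b,q⟩ | ⟨e,b,q⟩ | ⟨e,b,q⟩ <;>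
      simp [lproj, lpair, ih, List.filterMap_cons]

lemma remove_eq_pair {V E : Type*} (c : E → ℕ∞) (W : List (LArc V E)) :
    ((W.filterMap lremove).map c).sum
      = ((W.filterMap lpair).map (fun x => if x.2 then c x.1 else 0)).sum := by
  induction W with
  | nil => simp
  | cons a t ih => rcases a with ⟨v,b,q⟩ | ⟨e,b,q⟩ | ⟨e,b,q⟩ <;>
      simp [lremove, lpair, ih, List.filterMap_cons]

lemma llen_eq_pair {V E : Type*} (lam : E → ℕ) (W : List (LArc V E)) :
    (W.map (llen lam)).sum
      = ((W.filterMap lpair).map (fun x => if x.2 then 0 else lam x.1)).sum := by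
  induction W with
  | nil => simp
  | cons a t ih => rcases a with ⟨v,b,q⟩ | ⟨e,b,q⟩ | ⟨e,b,q⟩ <;>
      simp [llen, lpair, ih, List.filterMap_cons]

lemma sum_map_eq_fin {α M : Type*} [AddCommMonoid M] (l : List α) (f : α → M) :
    (l.map f).sum = ∑ i : Fin l.length, f (l.get i) := by
  simpa [List.get_eq_getElem] using (Fin.sum_univ_get' l f).symm

lemma toFinset_sum_le {E : Type*} [DecidableEq E] (c : E → ℕ∞) (l : List E) :
    (∑ e ∈ l.toFinset, c e) ≤ (l.map c).sum := by
  induction l with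
  | nil => simp
  | cons a t ih =>
    simp only [List.toFinset_cons, List.map_cons, List.sum_cons]
    by_cases h : a ∈ t.toFinset
    · rw [Finset.insert_eq_self.mpr h]; exact ih.trans le_add_self
    · rw [Finset.sum_insert h]; exact add_le_add_right ih _

lemma redLen_le_aux {E : Type*} [DecidableEq E] (lam : E → ℕ) (c : E → ℕ∞) (b : ℕ)
    (P : List (E × Bool))
    (hc : (P.map (fun x => if x.2 then c x.1 else 0)).sum ≤ (b : ℕ∞)) :
    redLenList lam c b (P.map Prod.fst)
      ≤ (P.map (fun x => if x.2 then 0 else lam x.1)).sum := by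
  classical
  apply Nat.sInf_le
  have hlen : (P.map Prod.fst).length = P.length := by simp
  refine ⟨Finset.univ.filter (fun j => (P.get (Fin.cast hlen j)).2 = true), ?_, ?_⟩
  · rw [sum_map_eq_fin] at hc
    refine le_trans (le_of_eq ?_) hc
    rw [Finset.sum_filter]
    refine Fintype.sum_equiv (finCongr hlen) _ _ fun j => ?_
    simp only [finCongr_apply, List.get_eq_getElem, Fin.coe_cast, List.getElem_map]
  · rw [sum_map_eq_fin, Finset.compl_filter, Finset.sum_filter]
    refine (Fintype.sum_equiv (finCongr hlen) _ _ fun j => ?_).symm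
    simp only [finCongr_apply, List.get_eq_getElem, Fin.coe_cast, List.getElem_map]
    split_ifs <;> simp_all
lemma walk_cons {V E : Type*} (esrc edst : E → V) (e : E) (v : V) (Lw : List E)
    (hw : IsWalkList esrc edst (edst e) v Lw) :
    IsWalkList esrc edst (esrc e) v (e :: Lw) := by
  obtain ⟨hc, hnil, hhd, hlast⟩ := hw
  refine ⟨List.isChain_cons.mpr ⟨fun a ha => (hhd a ha).symm, hc⟩, by simp, by simp, ?_⟩
  intro a ha
  cases Lw with
  | nil =>
    simp only [List.getLast?_singleton, Option.mem_some_iff] at ha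
    subst ha
    exact hnil rfl
  | cons b t =>
    rw [List.getLast?_cons_cons] at ha
    exact hlast a ha

lemma main_ind {V E : Type*} (esrc edst : E → V) (p : E → ℤ) (c : E → ℕ∞) (B L : ℕ)
    (v : V) (b₂ : ℕ) (q₂ : ℤ) (W : List (LArc V E)) :
    ∀ (u : V) (b₁ : ℕ) (q₁ : ℤ),
    (∀ a ∈ W, LValid p c B L a) →
    W.Chain' (fun a b => ldst edst p c a = lsrc esrc b) →
    (W = [] → ((u, b₁, q₁) : V × ℕ × ℤ) = (v, b₂, q₂)) →
    (∀ a ∈ W.head?, lsrc esrc a = (u, b₁, q₁)) →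
    (∀ a ∈ W.getLast?, ldst edst p c a = (v, b₂, q₂)) →
    IsWalkList esrc edst u v (W.filterMap lproj) ∧
    ((W.filterMap lproj).map p).sum = q₂ - q₁ ∧
    b₂ ≤ b₁ ∧
    ((W.filterMap lremove).map c).sum ≤ ((b₁ - b₂ : ℕ) : ℕ∞) := by
  induction W with
  | nil =>
    intro u b₁ q₁ hval hch hnil hhd hlast
    obtain ⟨rfl, rfl, rfl⟩ := Prod.mk.injEq .. ▸ hnil rfl
    exact ⟨⟨List.isChain_nil, fun _ => rfl, by simp, by simp⟩, by simp, le_refl _, by simp⟩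
  | cons a t ih =>
    intro u b₁ q₁ hval hch hnil hhd hlast
    have hsrc : lsrc esrc a = (u, b₁, q₁) := hhd a rfl
    have hchp := List.isChain_cons.mp hch
    have hval' : ∀ x ∈ t, LValid p c B L x := fun x hx => hval x (List.mem_cons_of_mem _ hx)
    have hlast' : ∀ x ∈ t.getLast?, ldst edst p c x = (v, b₂, q₂) := by
      cases t with
      | nil => intro x hx; simp at hx
      | cons b t' =>
        intro x hx
        exact hlast x (by rw [List.getLast?_cons_cons]; exact hx)
    have hnext : ∀ x ∈ t.head?, lsrc esrc x = ldst edst p c a :=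
      fun x hx => (hchp.1 x hx).symm
    have hnil' : t = [] → ldst edst p c a = (v, b₂, q₂) := by
      intro h; subst h; exact hlast a (by simp)
    rcases a with ⟨w, b, q⟩ | ⟨e, b, q⟩ | ⟨e, b, q⟩
    · -- budget arc
      simp only [lsrc] at hsrc
      obtain ⟨rfl, rfl, rfl⟩ := Prod.mk.injEq .. ▸ hsrc
      have hb : 1 ≤ b₁ := (hval _ (List.mem_cons_self)).1
      obtain ⟨HW, Hq, Hb, Hc⟩ := ih w (b₁ - 1) q₁ hval' hchp.2 hnil' hnext hlast'
      refine ⟨by simpa [lproj, List.filterMap_cons] using HW, by simpa [lproj, List.filterMap_cons] using Hq, by omega, ?_⟩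
      refine le_trans ?_ (Nat.cast_le.mpr (show b₁ - 1 - b₂ ≤ b₁ - b₂ by omega))
      simpa [lremove, List.filterMap_cons] using Hc
    · -- keep arc
      simp only [lsrc] at hsrc
      obtain ⟨rfl, rfl, rfl⟩ := Prod.mk.injEq .. ▸ hsrc
      obtain ⟨HW, Hq, Hb, Hc⟩ := ih (edst e) b₁ (q₁ + p e) hval' hchp.2 hnil' hnext hlast'
      refine ⟨?_, ?_, Hb, by simpa [lremove, List.filterMap_cons] using Hc⟩
      · have := walk_cons esrc edst e v _ HW
        simpa [lproj, List.filterMap_cons] using this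
      · simp only [lproj, List.filterMap_cons, List.map_cons, List.sum_cons]
        rw [Hq]; ring
    · -- remove arc
      simp only [lsrc] at hsrc
      obtain ⟨rfl, rfl, rfl⟩ := Prod.mk.injEq .. ▸ hsrc
      have hce : c e ≤ (b₁ : ℕ∞) := (hval _ (List.mem_cons_self)).1
      have hcne : c e ≠ ⊤ := (hce.trans_lt (ENat.coe_lt_top b₁)).ne
      have hck : ((c e).toNat : ℕ∞) = c e := ENat.coe_toNat hcne
      have hkb : (c e).toNat ≤ b₁ := Nat.cast_le.mp (hck ▸ hce)
      obtain ⟨HW, Hq, Hb, Hc⟩ :=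
        ih (edst e) (b₁ - (c e).toNat) (q₁ + p e) hval' hchp.2 hnil' hnext hlast'
      refine ⟨?_, ?_, by omega, ?_⟩
      · have := walk_cons esrc edst e v _ HW
        simpa [lproj, List.filterMap_cons] using this
      · simp only [lproj, List.filterMap_cons, List.map_cons, List.sum_cons]
        rw [Hq]; ring
      · simp only [lremove, List.filterMap_cons, List.map_cons, List.sum_cons]
        rw [← hck]
        calc ((c e).toNat : ℕ∞) + ((t.filterMap lremove).map c).sum
            ≤ ((c e).toNat : ℕ∞) + ((b₁ - (c e).toNat - b₂ : ℕ) : ℕ∞) :=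
              add_le_add_right Hc _
          _ = (((c e).toNat + (b₁ - (c e).toNat - b₂) : ℕ) : ℕ∞) := by
              rw [Nat.cast_add]
          _ ≤ ((b₁ - b₂ : ℕ) : ℕ∞) := Nat.cast_le.mpr (by omega)
theorem statement9 {V E : Type*} [Fintype V] [Fintype E] [DecidableEq E]
    (esrc edst : E → V) (p : E → ℤ) (hp : ∀ e, p e ∈ ({-1, 0, 1} : Set ℤ))
    (lam : E → ℕ) (c : E → ℕ∞) (B L : ℕ)
    (u v : V) (b₁ b₂ : ℕ) (q₁ q₂ : ℤ)
    (W : List (LArc V E))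
    (hW : IsLPath esrc edst p c B L (u, b₁, q₁) (v, b₂, q₂) W) :
    IsWalkList esrc edst u v (W.filterMap lproj) ∧
    ((W.filterMap lproj).map p).sum = q₂ - q₁ ∧
    (∑ e ∈ (W.filterMap lremove).toFinset, c e) ≤ (b₁ : ℕ∞) - (b₂ : ℕ∞) ∧
    redLenList lam c (b₁ - b₂) (W.filterMap lproj) ≤ (W.map (llen lam)).sum := by

  obtain ⟨hval, hch, hnil, hhd, hlast, -⟩ := hW
  obtain ⟨HW, Hq, Hb, Hc⟩ :=
    main_ind esrc edst p c B L v b₂ q₂ W u b₁ q₁ hval hch hnil hhd hlast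
  refine ⟨HW, Hq, ?_, ?_⟩
  · refine le_trans (toFinset_sum_le c _) (le_trans Hc (le_of_eq ?_))
    exact_mod_cast (ENat.coe_sub b₁ b₂)
  · rw [proj_eq_pair W, llen_eq_pair lam W]
    exact redLen_le_aux lam c (b₁ - b₂) _ (remove_eq_pair c W ▸ Hc)
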